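/- Let k be a field, p ≥ 1 an integer, and let T = ((V_s)_{s ∈ ℤ/p}, (x_s : V_s → V_{s+1})_{s ∈ ℤ/p}) be a nilpotent finite-dimensional representation of the cyclic quiver with p vertices over k. If every short exact sequence of representations 0 → T → E → T → 0 splits (i.e., T admits no nontrivial self-extension), then there exists a vertex u ∈ ℤ/p with V_u = 0. Equivalently, the class of T in the Grothendieck group lies in the span of the simple classes [S^{(l)}] for l ≠ u, i.e., T has no composition factor isomorphic to the simple S^{(u)}. -/

import Mathlib

/-!
A rigid nilpotent representation of the cyclic quiver misses a vertex.

We encode a (finite-dimensional) representation of the cyclic quiver with `p`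
vertices over a field `k`, of dimension vector `d : ZMod p → ℕ`, as a single
matrix `X` on the total space `⊕_{s} k^{d s}` supported on the blocks
`s → s + 1`; the `(s+1, s)` block of `X` is the structure map `x_s : V_s → V_{s+1}`.
The representation is nilpotent exactly when `X ^ m = 0` for some `m`, i.e. when all
sufficiently long composites of the structure maps vanish.  Morphisms of
representations are block-diagonal (vertex-wise) matrices intertwining the structure
matrices, and a short exact sequence `0 → T → E → T → 0` is given by an injective
morphism `ι : T → E` and a surjective morphism `π : E → T` with
`range ι = ker π`; it splits when there is a retraction `ρ : E → T`, i.e. a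
morphism with `ρ * ι = 1`.
-/

/-- The index set of the total space `⊕_{s : ZMod p} k^{d s}`. -/
abbrev CycIdx (p : ℕ) (d : ZMod p → ℕ) := Σ s : ZMod p, Fin (d s)

/-- A matrix on the total space is supported on the arrows `s → s + 1` of the
cyclic quiver. -/
def CycSupported (p : ℕ) [NeZero p] (k : Type) [Field k] (d : ZMod p → ℕ)
    (X : Matrix (CycIdx p d) (CycIdx p d) k) : Prop :=
  ∀ a b : CycIdx p d, b.1 ≠ a.1 + 1 → X b a = 0

/-- A block-diagonal matrix, i.e. a family of linear maps indexed by the vertices of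
the cyclic quiver. -/
def CycBlockDiag (p : ℕ) [NeZero p] (k : Type) [Field k] (d e : ZMod p → ℕ)
    (f : Matrix (CycIdx p e) (CycIdx p d) k) : Prop :=
  ∀ (b : CycIdx p e) (a : CycIdx p d), b.1 ≠ a.1 → f b a = 0

lemma cyc_pow_supported (p : ℕ) [NeZero p] (k : Type) [Field k] (d : ZMod p → ℕ)
    (X : Matrix (CycIdx p d) (CycIdx p d) k) (hsupp : CycSupported p k d X) :
    ∀ (i : ℕ) (a b : CycIdx p d), b.1 ≠ a.1 + (i : ZMod p) → (X ^ i) b a = 0 := by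
  intro i
  induction i with
  | zero =>
    intro a b hba
    simp only [Nat.cast_zero, add_zero] at hba
    rw [pow_zero]
    exact Matrix.one_apply_ne (fun h => hba (by rw [h]))
  | succ n ih =>
    intro a b hba
    rw [pow_succ, Matrix.mul_apply]
    apply Finset.sum_eq_zero
    intro c _
    by_cases hc : c.1 = a.1 + 1
    · have : b.1 ≠ c.1 + (n : ZMod p) := by
        rw [hc]; push_cast at hba ⊢; intro h; apply hba; rw [h]; ring
      rw [ih c b this, zero_mul]
    · rw [hsupp a c hc, mul_zero]

lemma cyc_exists_commuting (p : ℕ) [NeZero p] (k : Type) [Field k] (d : ZMod p → ℕ)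
    (X : Matrix (CycIdx p d) (CycIdx p d) k) (hsupp : CycSupported p k d X)
    (hnilp : ∃ m : ℕ, X ^ m = 0) (hpos : ∀ s, 0 < d s) :
    ∃ G : Matrix (CycIdx p d) (CycIdx p d) k,
      X * G = G * X ∧ (∀ α β : CycIdx p d, β.1 ≠ α.1 + 1 → G α β = 0) ∧ G ≠ 0 := by
  classical
  obtain ⟨m, hm⟩ := hnilp
  -- vertex projections
  set P : ZMod p → Matrix (CycIdx p d) (CycIdx p d) k :=
    fun s => Matrix.diagonal (fun a => if a.1 = s then 1 else 0) with hP
  have hpow_zero : ∀ n : ℕ, m ≤ n → X ^ n = 0 := by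
    intro n hn
    rw [show n = (n - m) + m by omega, pow_add, hm, mul_zero]
  set t : ZMod p → ℕ := fun s => Nat.findGreatest (fun q => X ^ q * P s ≠ 0) m with ht
  have hP0 : ∀ s, X ^ 0 * P s ≠ 0 := by
    intro s h
    have h2 := congrFun (congrFun h ⟨s, ⟨0, hpos s⟩⟩) ⟨s, ⟨0, hpos s⟩⟩
    rw [pow_zero, one_mul] at h2
    simp [hP, Matrix.diagonal_apply_eq] at h2
  have ht_spec : ∀ s, X ^ (t s) * P s ≠ 0 := by
    intro s
    exact Nat.findGreatest_spec (P := fun q => X ^ q * P s ≠ 0) (Nat.zero_le m) (hP0 s)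
  have ht_top : ∀ s, X ^ (t s + 1) * P s = 0 := by
    intro s
    by_cases hle : t s + 1 ≤ m
    · have h1 := Nat.findGreatest_is_greatest (P := fun q => X ^ q * P s ≠ 0)
        (Nat.lt_succ_self (t s)) hle
      rw [not_ne_iff] at h1
      exact h1
    · rw [hpow_zero (t s + 1) (by omega), zero_mul]
  -- minimizing vertex
  obtain ⟨s₀, -, hs₀⟩ := Finset.exists_min_image Finset.univ t ⟨0, Finset.mem_univ 0⟩
  set v : ZMod p := s₀ + 1 with hv
  set q : ℕ := t s₀ with hqdef
  have hqv : X ^ q * P v ≠ 0 := by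
    intro h0
    apply ht_spec v
    have h1 : X ^ (t v) * P v = X ^ (t v - q) * (X ^ q * P v) := by
      rw [← mul_assoc, ← pow_add]
      congr 2
      have := hs₀ v (Finset.mem_univ v)
      omega
    rw [h1, h0, mul_zero]
  obtain ⟨r, u, hru0⟩ : ∃ r u, (X ^ q * P v) r u ≠ 0 := by
    by_contra hcon
    push_neg at hcon
    exact hqv (Matrix.ext fun r u => hcon r u)
  have hentry : (X ^ q * P v) r u = (X ^ q) r u * (if u.1 = v then 1 else 0) := by
    rw [hP]; exact Matrix.mul_diagonal _ _ _ _
  have hu : u.1 = v := by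
    by_contra h
    rw [hentry, if_neg h, mul_zero] at hru0
    exact hru0 rfl
  have hru : (X ^ q) r u ≠ 0 := by
    intro h
    rw [hentry, h, zero_mul] at hru0
    exact hru0 rfl
  set y₀ : CycIdx p d := ⟨s₀, ⟨0, hpos s₀⟩⟩ with hy₀
  set c : k := ((X ^ q) r u)⁻¹ with hc
  set R : Matrix (CycIdx p d) (CycIdx p d) k :=
    Matrix.of (fun a b => if a = y₀ ∧ b = r then c else 0) with hR
  have hmulR : ∀ A : Matrix (CycIdx p d) (CycIdx p d) k,
      A * R = Matrix.of (fun a b => if b = r then A a y₀ * c else 0) := by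
    intro A
    ext a b
    rw [Matrix.mul_apply]
    by_cases hb : b = r
    · subst hb
      rw [Matrix.of_apply, if_pos rfl]
      rw [Finset.sum_eq_single y₀]
      · simp [hR]
      · intro w _ hw; simp [hR, hw]
      · intro h; exact absurd (Finset.mem_univ y₀) h
    · rw [Matrix.of_apply, if_neg hb]
      apply Finset.sum_eq_zero
      intro w _
      simp [hR, hb]
  -- the zero column fact
  have hcol : ∀ a, (X ^ (q + 1)) a y₀ = 0 := by
    intro a
    have h1 := congrFun (congrFun (ht_top s₀) a) y₀
    rw [hP] at h1
    rw [Matrix.mul_diagonal] at h1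
    simpa [hy₀] using h1
  have hXR : X ^ (q + 1) * R = 0 := by
    rw [hmulR]
    ext a b
    simp [hcol a]
  -- the key entry lemma
  have hkey : ∀ (n : ℕ) (S : Matrix (CycIdx p d) (CycIdx p d) k) (a b : CycIdx p d),
      ((X ^ n * R) * S) a b = (X ^ n) a y₀ * c * S r b := by
    intro n S a b
    rw [hmulR, Matrix.mul_apply]
    rw [Finset.sum_eq_single r]
    · simp
    · intro w _ hw; simp [hw]
    · intro h; exact absurd (Finset.mem_univ r) h
  -- G
  set G : Matrix (CycIdx p d) (CycIdx p d) k :=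
    ∑ i ∈ Finset.range (q + 1), (X ^ i * R) * (X ^ (q - i) * P (v + (i : ℕ))) with hG
  refine ⟨G, ?_, ?_, ?_⟩
  · -- commutation
    have hPX : ∀ s : ZMod p, P s * X = X * P (s - 1) := by
      intro s
      ext a b
      rw [hP]
      rw [Matrix.diagonal_mul, Matrix.mul_diagonal]
      by_cases hX : X a b = 0
      · rw [hX, mul_zero, zero_mul]
      · have ha : a.1 = b.1 + 1 := by
          by_contra h; exact hX (hsupp b a h)
        have hiff : a.1 = s ↔ b.1 = s - 1 := by
          rw [ha]; exact eq_sub_iff_add_eq.symm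
        rw [if_congr hiff rfl rfl]
        exact mul_comm _ _
    set F : ℕ → Matrix (CycIdx p d) (CycIdx p d) k :=
      fun i => (X ^ i * R) * (X ^ (q + 1 - i) * P (v + (i : ℕ) - 1)) with hF
    have h1 : X * G = ∑ i ∈ Finset.range (q + 1), F (i + 1) := by
      rw [hG, Finset.mul_sum]
      apply Finset.sum_congr rfl
      intro i hi
      rw [Finset.mem_range] at hi
      have e1 : q + 1 - (i + 1) = q - i := by omega
      have e2 : v + ((i + 1 : ℕ) : ZMod p) - 1 = v + (i : ℕ) := by push_cast; ring
      simp only [hF, e1, e2, pow_succ', mul_assoc]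
    have h2 : G * X = ∑ i ∈ Finset.range (q + 1), F i := by
      rw [hG, Finset.sum_mul]
      apply Finset.sum_congr rfl
      intro i hi
      rw [Finset.mem_range] at hi
      have e1 : q + 1 - i = (q - i) + 1 := by omega
      simp only [hF, e1, pow_succ, mul_assoc]
      rw [hPX (v + (i : ℕ))]
    have h4 : X * G - G * X = F (q + 1) - F 0 := by
      rw [h1, h2, ← Finset.sum_sub_distrib, Finset.sum_range_sub (f := F)]
    have hFq : F (q + 1) = 0 := by
      rw [hF]
      simp only []
      rw [hXR, zero_mul]
    have hF0 : F 0 = 0 := by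
      rw [hF]
      simp only []
      have e3 : v + ((0 : ℕ) : ZMod p) - 1 = s₀ := by push_cast; rw [hv]; ring
      have h5 : X ^ (q + 1) * P s₀ = 0 := by rw [hqdef]; exact ht_top s₀
      rw [e3, Nat.sub_zero, h5, mul_zero]
    rw [hFq, hF0, sub_zero] at h4
    exact sub_eq_zero.mp h4
  · -- support
    intro α β hba
    rw [hG, Matrix.sum_apply]
    apply Finset.sum_eq_zero
    intro i _
    rw [hkey]
    have hPe : (X ^ (q - i) * P (v + (i : ℕ))) r β
        = (X ^ (q - i)) r β * (if β.1 = v + (i : ℕ) then 1 else 0) := by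
      rw [hP]; exact Matrix.mul_diagonal _ _ _ _
    by_cases hβ : β.1 = v + (i : ℕ)
    · have hXi : (X ^ i) α y₀ = 0 := by
        apply cyc_pow_supported p k d X hsupp
        intro h
        apply hba
        rw [hβ, hv, h, hy₀]
        ring
      rw [hXi, zero_mul, zero_mul]
    · rw [hPe, if_neg hβ, mul_zero, mul_zero]
  · -- nonzero
    intro hG0
    set Cj : ℕ → Prop := fun i => ∃ a, (X ^ i) a y₀ ≠ 0 with hCj
    have hCj0 : Cj 0 := ⟨y₀, by rw [pow_zero]; simp [Matrix.one_apply]⟩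
    set jj := Nat.findGreatest Cj m with hjj
    have hjspec : Cj jj := Nat.findGreatest_spec (P := Cj) (Nat.zero_le m) hCj0
    have hjtop : ∀ i : ℕ, 1 ≤ i → ∀ a, (X ^ (jj + i)) a y₀ = 0 := by
      intro i hi a
      by_cases hle : jj + i ≤ m
      · have hlt : jj < jj + i := by omega
        rw [hjj] at hlt
        have h1 := Nat.findGreatest_is_greatest (P := Cj) hlt hle
        by_contra hne
        exact h1 ⟨a, hne⟩
      · rw [hpow_zero _ (by omega)]
        rfl
    obtain ⟨a₀, ha₀⟩ := hjspec
    have hGentry : (X ^ jj * G) a₀ u = (X ^ jj) a₀ y₀ := by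
      rw [hG, Finset.mul_sum, Matrix.sum_apply]
      rw [Finset.sum_eq_single_of_mem 0 (Finset.mem_range.mpr (by omega))]
      · simp only [pow_zero, one_mul, Nat.sub_zero, Nat.cast_zero, add_zero]
        rw [← mul_assoc, hkey]
        have h7 : (X ^ q * P v) r u = (X ^ q) r u := by
          rw [hentry, if_pos hu, mul_one]
        rw [h7, hc, mul_assoc, inv_mul_cancel₀ hru, mul_one]
      · intro i hi hne
        have h8 : X ^ jj * ((X ^ i * R) * (X ^ (q - i) * P (v + (i : ℕ))))
            = (X ^ (jj + i) * R) * (X ^ (q - i) * P (v + (i : ℕ))) := by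
          simp only [pow_add, mul_assoc]
        rw [h8, hkey, hjtop i (by omega) a₀, zero_mul, zero_mul]
    rw [hG0, mul_zero] at hGentry
    rw [Matrix.zero_apply] at hGentry
    exact ha₀ hGentry.symm

/-- **A rigid nilpotent representation of the cyclic quiver misses a vertex.**
Let `T = (V_s, x_s)` be a nilpotent finite-dimensional representation of the cyclic
quiver with `p ≥ 1` vertices over a field `k`, of dimension vector `d`.  If every
short exact sequence of representations `0 → T → E → T → 0` splits (i.e. `T` has no
nontrivial self-extension), then there is a vertex `u` with `V_u = 0`, i.e.
`d u = 0`; equivalently, `T` has no composition factor isomorphic to the simple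
`S^{(u)}`. -/
theorem rigid_nilpotent_cyclic_rep_misses_a_vertex
    (p : ℕ) [NeZero p] (hp : 1 ≤ p) (k : Type) [Field k]
    (d : ZMod p → ℕ) (X : Matrix (CycIdx p d) (CycIdx p d) k)
    (hsupp : CycSupported p k d X)
    (hnilp : ∃ m : ℕ, X ^ m = 0)
    (hsplit : ∀ (e : ZMod p → ℕ) (Y : Matrix (CycIdx p e) (CycIdx p e) k),
      CycSupported p k e Y →
      ∀ (ι : Matrix (CycIdx p e) (CycIdx p d) k) (π : Matrix (CycIdx p d) (CycIdx p e) k),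
        CycBlockDiag p k d e ι → CycBlockDiag p k e d π →
        ι * X = Y * ι → π * Y = X * π →
        Function.Injective ι.mulVecLin → Function.Surjective π.mulVecLin →
        LinearMap.range ι.mulVecLin = LinearMap.ker π.mulVecLin →
        ∃ ρ : Matrix (CycIdx p d) (CycIdx p e) k,
          CycBlockDiag p k e d ρ ∧ ρ * Y = X * ρ ∧ ρ * ι = 1) :
    ∃ u : ZMod p, d u = 0 := by
  classical
  by_contra hcon
  push_neg at hcon
  have hpos : ∀ s, 0 < d s := fun s => Nat.pos_of_ne_zero (hcon s)
  obtain ⟨G, hcomm, hGsupp, hGne⟩ := cyc_exists_commuting p k d X hsupp hnilp hpos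
  -- pick a nonzero entry of G
  obtain ⟨α, β, hαβ⟩ : ∃ α β, G α β ≠ 0 := by
    by_contra h
    push_neg at h
    exact hGne (Matrix.ext fun i j => h i j)
  have hβα : β.1 = α.1 + 1 := by
    by_contra h
    exact hαβ (hGsupp α β h)
  -- the extension class
  set Δ : Matrix (CycIdx p d) (CycIdx p d) k :=
    Matrix.of (fun b a => if b = β ∧ a = α then 1 else 0) with hΔ
  have hΔsupp : ∀ b a : CycIdx p d, b.1 ≠ a.1 + 1 → Δ b a = 0 := by
    intro b a h
    rw [hΔ, Matrix.of_apply, if_neg]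
    rintro ⟨rfl, rfl⟩
    exact h hβα
  have htrΔ : Matrix.trace (G * Δ) = G α β := by
    rw [Matrix.trace]
    rw [Finset.sum_eq_single_of_mem α (Finset.mem_univ α)]
    · rw [Matrix.diag_apply, Matrix.mul_apply]
      rw [Finset.sum_eq_single_of_mem β (Finset.mem_univ β)]
      · simp [hΔ]
      · intro w _ hw
        rw [hΔ]
        simp [hw]
    · intro x _ hx
      rw [Matrix.diag_apply, Matrix.mul_apply]
      apply Finset.sum_eq_zero
      intro w _
      rw [hΔ, Matrix.of_apply, if_neg (by rintro ⟨rfl, rfl⟩; exact hx rfl), mul_zero]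
  -- the self-extension
  set e' : ZMod p → ℕ := fun s => d s + d s with he'
  set ee : CycIdx p e' ≃ (CycIdx p d ⊕ CycIdx p d) :=
    (Equiv.sigmaCongrRight fun s => finSumFinEquiv.symm).trans
      (Equiv.sigmaSumDistrib _ _) with hee
  have hvtx : ∀ x : CycIdx p e', ((ee x).elim Sigma.fst Sigma.fst) = x.1 := by
    rintro ⟨s, i⟩
    rcases h : (finSumFinEquiv.symm i : Fin (d s) ⊕ Fin (d s)) with a | a <;>
      simp [hee, Equiv.sigmaSumDistrib, Equiv.sigmaCongrRight, h]
  set B : Matrix (CycIdx p d ⊕ CycIdx p d) (CycIdx p d ⊕ CycIdx p d) k :=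
    Matrix.fromBlocks X Δ 0 X with hB
  set Y : Matrix (CycIdx p e') (CycIdx p e') k := B.submatrix ⇑ee ⇑ee with hY
  set ι : Matrix (CycIdx p e') (CycIdx p d) k :=
    (Matrix.fromRows (1 : Matrix (CycIdx p d) (CycIdx p d) k) 0).submatrix ⇑ee id with hι
  set ι₂ : Matrix (CycIdx p e') (CycIdx p d) k :=
    (Matrix.fromRows (0 : Matrix (CycIdx p d) (CycIdx p d) k) 1).submatrix ⇑ee id with hι₂
  set π : Matrix (CycIdx p d) (CycIdx p e') k :=
    (Matrix.fromCols (0 : Matrix (CycIdx p d) (CycIdx p d) k) 1).submatrix id ⇑ee with hπ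
  -- supportedness of Y
  have hYsupp : CycSupported p k e' Y := by
    intro a b hba
    rw [hY, Matrix.submatrix_apply]
    have hvb := hvtx b
    have hva := hvtx a
    rcases hb : ee b with b' | b' <;> rcases ha : ee a with a' | a' <;>
      rw [hb] at hvb <;> rw [ha] at hva <;> simp only [Sum.elim_inl, Sum.elim_inr] at hvb hva <;>
      rw [hB]
    · exact hsupp a' b' (by rw [hvb, hva]; exact hba)
    · exact hΔsupp b' a' (by rw [hvb, hva]; exact hba)
    · rfl
    · exact hsupp a' b' (by rw [hvb, hva]; exact hba)
  -- block diagonality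
  have hιbd : CycBlockDiag p k d e' ι := by
    intro b a hba
    rw [hι, Matrix.submatrix_apply, id_eq]
    have hvb := hvtx b
    rcases hb : ee b with b' | b' <;> rw [hb] at hvb <;>
      simp only [Sum.elim_inl, Sum.elim_inr] at hvb
    · rw [Matrix.fromRows_apply_inl]
      apply Matrix.one_apply_ne
      rintro rfl
      exact hba (by rw [← hvb])
    · rw [Matrix.fromRows_apply_inr]
      rfl
  have hπbd : CycBlockDiag p k e' d π := by
    intro b a hba
    rw [hπ, Matrix.submatrix_apply, id_eq]
    have hva := hvtx a
    rcases ha : ee a with a' | a' <;> rw [ha] at hva <;>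
      simp only [Sum.elim_inl, Sum.elim_inr] at hva
    · rw [Matrix.fromCols_apply_inl]
      rfl
    · rw [Matrix.fromCols_apply_inr]
      apply Matrix.one_apply_ne
      rintro rfl
      exact hba (by rw [← hva])
  -- submatrix multiplication helpers
  have hsub_right : ∀ (M N : Matrix (CycIdx p d) (CycIdx p d) k),
      ((Matrix.fromRows M N).submatrix ⇑ee id) * X
        = (Matrix.fromRows M N * X).submatrix ⇑ee id := by
    intro M N
    have := Matrix.submatrix_mul_equiv (Matrix.fromRows M N) X ⇑ee (Equiv.refl (CycIdx p d)) id
    simpa using this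
  have hsub_rightD : ∀ (M N : Matrix (CycIdx p d) (CycIdx p d) k),
      ((Matrix.fromRows M N).submatrix ⇑ee id) * Δ
        = (Matrix.fromRows M N * Δ).submatrix ⇑ee id := by
    intro M N
    have := Matrix.submatrix_mul_equiv (Matrix.fromRows M N) Δ ⇑ee (Equiv.refl (CycIdx p d)) id
    simpa using this
  -- intertwining: ι * X = Y * ι
  have hιX : ι * X = Y * ι := by
    rw [hι, hY, hsub_right]
    rw [Matrix.submatrix_mul_equiv B (Matrix.fromRows 1 0) ⇑ee ee id]
    congr 1
    rw [hB, Matrix.fromRows_mul, Matrix.fromBlocks_mul_fromRows]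
    simp
  -- intertwining: π * Y = X * π
  have hπY : π * Y = X * π := by
    rw [hπ, hY]
    rw [Matrix.submatrix_mul_equiv (Matrix.fromCols 0 1) B id ee ⇑ee]
    have h2 : X * (Matrix.fromCols (0 : Matrix (CycIdx p d) (CycIdx p d) k) 1).submatrix id ⇑ee
        = (X * Matrix.fromCols (0 : Matrix (CycIdx p d) (CycIdx p d) k) 1).submatrix id ⇑ee := by
      have := Matrix.submatrix_mul_equiv X
        (Matrix.fromCols (0 : Matrix (CycIdx p d) (CycIdx p d) k) 1) id
        (Equiv.refl (CycIdx p d)) ⇑ee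
      simpa using this
    rw [h2]
    congr 1
    rw [hB, Matrix.fromCols_mul_fromBlocks, Matrix.mul_fromCols]
    simp
  -- mulVec descriptions
  have hιv : ∀ v : CycIdx p d → k, ι.mulVec v = Sum.elim v 0 ∘ ⇑ee := by
    intro v
    rw [hι]
    have := Matrix.submatrix_mulVec_equiv
      (Matrix.fromRows (1 : Matrix (CycIdx p d) (CycIdx p d) k) 0) v ⇑ee
      (Equiv.refl (CycIdx p d))
    simp only [Equiv.coe_refl, Equiv.refl_symm] at this
    rw [show (v ∘ (id : CycIdx p d → CycIdx p d)) = v from rfl] at this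
    rw [this, Matrix.fromRows_mulVec, Matrix.one_mulVec, Matrix.zero_mulVec]
  have hπv : ∀ v : CycIdx p e' → k, π.mulVec v = fun a => v (ee.symm (Sum.inr a)) := by
    intro v
    rw [hπ]
    have := Matrix.submatrix_mulVec_equiv
      (Matrix.fromCols (0 : Matrix (CycIdx p d) (CycIdx p d) k) 1) v
      (id : CycIdx p d → CycIdx p d) ee
    rw [this]
    have hsum : v ∘ ⇑ee.symm = Sum.elim (fun x => v (ee.symm (Sum.inl x)))
        (fun x => v (ee.symm (Sum.inr x))) := by
      funext σ; rcases σ with x | x <;> rfl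
    rw [hsum, Matrix.fromCols_mulVec_sumElim, Matrix.zero_mulVec, Matrix.one_mulVec]
    funext a
    simp
  -- injectivity
  have hιinj : Function.Injective ι.mulVecLin := by
    intro v w h
    funext a
    have h1 := congrFun h (ee.symm (Sum.inl a))
    rw [Matrix.mulVecLin_apply, Matrix.mulVecLin_apply, hιv, hιv] at h1
    simpa using h1
  -- surjectivity
  have hπsurj : Function.Surjective π.mulVecLin := by
    intro w
    refine ⟨fun x => Sum.elim (fun _ => (0 : k)) w (ee x), ?_⟩
    rw [Matrix.mulVecLin_apply, hπv]
    funext a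
    simp
  -- exactness
  have hexact : LinearMap.range ι.mulVecLin = LinearMap.ker π.mulVecLin := by
    ext x
    simp only [LinearMap.mem_range, LinearMap.mem_ker, Matrix.mulVecLin_apply]
    constructor
    · rintro ⟨v, rfl⟩
      rw [hπv, hιv]
      funext a
      simp
    · intro hx
      rw [hπv] at hx
      refine ⟨fun a => x (ee.symm (Sum.inl a)), ?_⟩
      rw [hιv]
      funext b
      rcases hb : ee b with a | a
      · have hb2 : b = ee.symm (Sum.inl a) := by rw [← hb, Equiv.symm_apply_apply]
        rw [Function.comp_apply, hb, hb2]
        rfl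
      · have hb2 : b = ee.symm (Sum.inr a) := by rw [← hb, Equiv.symm_apply_apply]
        rw [Function.comp_apply, hb, hb2]
        exact (congrFun hx a).symm
  -- apply the splitting hypothesis
  obtain ⟨ρ, hρbd, hρY, hρι⟩ := hsplit e' Y hYsupp ι π hιbd hπbd hιX hπY hιinj hπsurj hexact
  -- derive Δ = X * ρ₂ - ρ₂ * X
  set ρ₂ : Matrix (CycIdx p d) (CycIdx p d) k := ρ * ι₂ with hρ₂
  have hYι₂ : Y * ι₂ = ι * Δ + ι₂ * X := by
    rw [hY, hι₂, hι]
    rw [Matrix.submatrix_mul_equiv B (Matrix.fromRows 0 1) ⇑ee ee id]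
    rw [hsub_rightD, hsub_right]
    have hbl : B * Matrix.fromRows (0 : Matrix (CycIdx p d) (CycIdx p d) k)
          (1 : Matrix (CycIdx p d) (CycIdx p d) k)
        = Matrix.fromRows (1 : Matrix (CycIdx p d) (CycIdx p d) k) 0 * Δ
          + Matrix.fromRows (0 : Matrix (CycIdx p d) (CycIdx p d) k) 1 * X := by
      rw [hB, Matrix.fromBlocks_mul_fromRows, Matrix.fromRows_mul, Matrix.fromRows_mul]
      ext (i | i) j <;> simp
    rw [hbl]
    rfl
  have hΔeq : Δ = X * ρ₂ - ρ₂ * X := by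
    have h1 : X * ρ₂ = Δ + ρ₂ * X := by
      calc X * ρ₂ = X * ρ * ι₂ := (Matrix.mul_assoc X ρ ι₂).symm
        _ = (ρ * Y) * ι₂ := by rw [hρY]
        _ = ρ * (Y * ι₂) := Matrix.mul_assoc ρ Y ι₂
        _ = ρ * (ι * Δ + ι₂ * X) := by rw [hYι₂]
        _ = ρ * (ι * Δ) + ρ * (ι₂ * X) := Matrix.mul_add ρ _ _
        _ = (ρ * ι) * Δ + (ρ * ι₂) * X := by rw [← Matrix.mul_assoc, ← Matrix.mul_assoc]
        _ = Δ + ρ₂ * X := by rw [hρι, Matrix.one_mul]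
    rw [h1]
    abel
  -- trace contradiction
  have htr0 : Matrix.trace (G * Δ) = 0 := by
    rw [hΔeq, mul_sub, Matrix.trace_sub]
    rw [← mul_assoc, ← hcomm, mul_assoc, Matrix.trace_mul_comm X (G * ρ₂), mul_assoc]
    exact sub_self _
  rw [htrΔ] at htr0
  exact hαβ htr0
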